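/- arXiv:2006.12728 — 2 statements merged into one kernel-verified Lean document; each statement's English description precedes it below -/
import Mathlib

section
/- Let n ≥ 0 be an integer, δ > 0, let W ⊂ ℝ^m be a measurable set of finite positive Lebesgue measure, and let g : W → ℝ be a bounded measurable function. Then lim_{τ→∞} τ^{n+1} ∫_W ∫₀^δ s^n e^{−τ s} e^{√τ · s · g(y)} ds dy = n! · |W|, where |W| denotes the Lebesgue measure of W. -/
open Filter MeasureTheory

section AuxStmt7
open Set Real

lemma aux_integrable (n : ℕ) {b : ℝ} (hb : 0 < b) :
    IntegrableOn (fun s : ℝ => s ^ n * Real.exp (-b * s)) (Set.Ioi 0) := by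
  have h := integrableOn_rpow_mul_exp_neg_mul_rpow (s := (n : ℝ)) (p := 1)
    (by exact_mod_cast neg_one_lt_zero.trans_le (Nat.cast_nonneg n)) one_pos hb
  refine h.congr_fun (fun x hx => ?_) measurableSet_Ioi
  beta_reduce
  rw [Real.rpow_one, Real.rpow_natCast]

lemma aux_integral (n : ℕ) {b : ℝ} (hb : 0 < b) :
    ∫ s in Set.Ioi (0:ℝ), s ^ n * Real.exp (-b * s) = n.factorial / b ^ (n + 1) := by
  have h := Real.integral_rpow_mul_exp_neg_mul_Ioi (a := (n : ℝ) + 1) (by positivity) hb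
  rw [show ((n : ℝ) + 1 - 1) = (n : ℝ) by ring] at h
  have he : ∫ s in Set.Ioi (0:ℝ), s ^ n * Real.exp (-b * s)
      = ∫ t in Set.Ioi (0:ℝ), t ^ (n : ℝ) * Real.exp (-(b * t)) := by
    refine setIntegral_congr_fun measurableSet_Ioi (fun x _ => ?_)
    rw [Real.rpow_natCast, neg_mul]
  rw [he, h, Real.Gamma_nat_eq_factorial]
  rw [show ((n : ℝ) + 1) = ((n + 1 : ℕ) : ℝ) by push_cast; ring, Real.rpow_natCast]
  rw [div_pow, one_pow]
  ring

/-- eventually, `τ/2 ≤ τ - √τ * a`. -/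
lemma aux_c_lb (a : ℝ) : ∀ᶠ τ : ℝ in atTop, τ / 2 ≤ τ - Real.sqrt τ * a ∧ 0 < τ := by
  filter_upwards [eventually_ge_atTop (max 1 (4 * a ^ 2))] with τ hτ
  have h1 : (1:ℝ) ≤ τ := le_trans (le_max_left _ _) hτ
  have h0 : 0 < τ := lt_of_lt_of_le one_pos h1
  refine ⟨?_, h0⟩
  have h2 : 4 * a ^ 2 ≤ τ := le_trans (le_max_right _ _) hτ
  have h3 : 2 * |a| ≤ Real.sqrt τ := by
    have := Real.sqrt_le_sqrt h2
    rwa [show 4 * a ^ 2 = (2 * |a|) ^ 2 by rw [mul_pow, sq_abs]; norm_num,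
      Real.sqrt_sq (by positivity)] at this
  have h4 : Real.sqrt τ * a ≤ τ / 2 := by
    calc Real.sqrt τ * a ≤ Real.sqrt τ * |a| :=
          mul_le_mul_of_nonneg_left (le_abs_self a) (Real.sqrt_nonneg τ)
      _ ≤ Real.sqrt τ * (Real.sqrt τ / 2) := by
          apply mul_le_mul_of_nonneg_left _ (Real.sqrt_nonneg τ)
          linarith
      _ = τ / 2 := by rw [mul_div_assoc', Real.mul_self_sqrt h0.le]
  linarith

lemma key_tendsto (n : ℕ) (δ a : ℝ) (hδ : 0 < δ) :
    Tendsto (fun τ : ℝ => τ ^ (n + 1) *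
      ∫ s in Set.Ioc (0:ℝ) δ, s ^ n * Real.exp (-(τ - Real.sqrt τ * a) * s))
      atTop (nhds (n.factorial : ℝ)) := by
  set c : ℝ → ℝ := fun τ => τ - Real.sqrt τ * a with hc
  -- main part
  have hmain : Tendsto (fun τ : ℝ => (n.factorial : ℝ) * (τ / c τ) ^ (n + 1)) atTop
      (nhds (n.factorial : ℝ)) := by
    have hq : Tendsto (fun τ : ℝ => c τ / τ) atTop (nhds 1) := by
      have h0 : Tendsto (fun τ : ℝ => a / Real.sqrt τ) atTop (nhds 0) :=
        Tendsto.div_atTop tendsto_const_nhds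
          ((tendsto_rpow_atTop (by norm_num : (0:ℝ) < 1/2)).congr
            fun x => (Real.sqrt_eq_rpow x).symm)
      have : Tendsto (fun τ : ℝ => 1 - a / Real.sqrt τ) atTop (nhds (1 - 0)) :=
        tendsto_const_nhds.sub h0
      rw [sub_zero] at this
      refine this.congr' ?_
      filter_upwards [eventually_gt_atTop (0:ℝ)] with τ h0'
      have hs : Real.sqrt τ ≠ 0 := (Real.sqrt_pos.2 h0').ne'
      simp only [hc]
      field_simp
      linear_combination a * Real.sq_sqrt h0'.le
    have hq' : Tendsto (fun τ : ℝ => τ / c τ) atTop (nhds 1) := by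
      have := (hq.inv₀ one_ne_zero)
      rw [inv_one] at this
      refine this.congr' ?_
      filter_upwards [aux_c_lb a] with τ ⟨hle, h0⟩
      rw [inv_div]
    have := (hq'.pow (n + 1)).const_mul (n.factorial : ℝ)
    simpa using this
  -- tail part
  have htail : Tendsto (fun τ : ℝ => τ ^ (n + 1) *
      ∫ s in Set.Ioi δ, s ^ n * Real.exp (-(c τ) * s)) atTop (nhds 0) := by
    have hub : Tendsto (fun τ : ℝ => (4:ℝ) ^ (n+1) * n.factorial * Real.exp (-(δ/4) * τ))
        atTop (nhds 0) := by
      have : Tendsto (fun τ : ℝ => -(δ/4) * τ) atTop atBot :=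
        tendsto_id.const_mul_atTop_of_neg (by linarith)
      simpa using (Real.tendsto_exp_atBot.comp this).const_mul ((4:ℝ)^(n+1) * n.factorial)
    refine squeeze_zero' ?_ ?_ hub
    · filter_upwards [aux_c_lb a] with τ ⟨hle, h0⟩
      have hcpos : 0 < c τ := lt_of_lt_of_le (by positivity) hle
      refine mul_nonneg (by positivity) (setIntegral_nonneg measurableSet_Ioi fun s hs => ?_)
      have hsp : (0:ℝ) < s := hδ.trans hs
      positivity
    · filter_upwards [aux_c_lb a] with τ ⟨hle, h0⟩
      have hcpos : 0 < c τ := lt_of_lt_of_le (by positivity) hle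
      have hc2 : 0 < c τ / 2 := by positivity
      have hI1 : ∫ s in Set.Ioi δ, s ^ n * Real.exp (-(c τ) * s)
          ≤ Real.exp (-(c τ) * δ / 2) * ∫ s in Set.Ioi δ, s ^ n * Real.exp (-(c τ / 2) * s) := by
        rw [← integral_const_mul]
        refine setIntegral_mono_on ?_ ?_ measurableSet_Ioi (fun s hs => ?_)
        · exact (aux_integrable n hcpos).mono_set (Ioi_subset_Ioi hδ.le)
        · exact (((aux_integrable n hc2).mono_set
            (Ioi_subset_Ioi hδ.le)).const_mul _)
        · have hs' : δ ≤ s := (le_of_lt hs)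
          rw [show Real.exp (-(c τ) * δ / 2) * (s ^ n * Real.exp (-(c τ / 2) * s))
              = s ^ n * (Real.exp (-(c τ) * δ / 2) * Real.exp (-(c τ / 2) * s)) by ring,
            ← Real.exp_add]
          have hsp : (0:ℝ) < s := hδ.trans hs
          refine mul_le_mul_of_nonneg_left (Real.exp_le_exp.2 ?_) (by positivity)
          nlinarith [hcpos]
      have hI2 : ∫ s in Set.Ioi δ, s ^ n * Real.exp (-(c τ / 2) * s)
          ≤ ∫ s in Set.Ioi (0:ℝ), s ^ n * Real.exp (-(c τ / 2) * s) := by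
        refine setIntegral_mono_set (aux_integrable n hc2) ?_
          (HasSubset.Subset.eventuallyLE (Ioi_subset_Ioi hδ.le))
        filter_upwards [ae_restrict_mem measurableSet_Ioi] with s hs
        simp only [Pi.zero_apply]
        have hsp : (0:ℝ) < s := hs
        positivity
      rw [aux_integral n hc2] at hI2
      have hnn : (0:ℝ) ≤ τ ^ (n+1) := by positivity
      calc τ ^ (n + 1) * ∫ s in Set.Ioi δ, s ^ n * Real.exp (-(c τ) * s)
          ≤ τ ^ (n + 1) * (Real.exp (-(c τ) * δ / 2) * (n.factorial / (c τ / 2) ^ (n+1))) := by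
            exact mul_le_mul_of_nonneg_left (hI1.trans (mul_le_mul_of_nonneg_left hI2
              (Real.exp_nonneg _))) hnn
        _ ≤ (4:ℝ) ^ (n+1) * n.factorial * Real.exp (-(δ/4) * τ) := by
            have he : Real.exp (-(c τ) * δ / 2) ≤ Real.exp (-(δ/4) * τ) := by
              refine Real.exp_le_exp.2 ?_
              nlinarith [hle, h0, hδ]
            have hp : τ ^ (n+1) * (n.factorial / (c τ / 2) ^ (n+1))
                ≤ (4:ℝ) ^ (n+1) * n.factorial := by
              have h4 : (τ / 4) ^ (n+1) ≤ (c τ / 2) ^ (n+1) :=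
                pow_le_pow_left₀ (by positivity) (by linarith) _
              have hkey : τ ^ (n+1) * (n.factorial : ℝ)
                  ≤ 4 ^ (n+1) * n.factorial * (c τ / 2) ^ (n+1) := by
                calc τ ^ (n+1) * (n.factorial : ℝ)
                    = 4 ^ (n+1) * n.factorial * (τ/4) ^ (n+1) := by
                      rw [div_pow]; field_simp
                  _ ≤ 4 ^ (n+1) * n.factorial * (c τ / 2) ^ (n+1) :=
                      mul_le_mul_of_nonneg_left h4 (by positivity)
              rw [mul_div_assoc', div_le_iff₀ (by positivity)]
              linarith
            calc τ ^ (n + 1) * (Real.exp (-(c τ) * δ / 2) * (n.factorial / (c τ / 2) ^ (n+1)))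
                = (τ ^ (n+1) * (n.factorial / (c τ / 2) ^ (n+1))) * Real.exp (-(c τ) * δ / 2) := by
                  ring
              _ ≤ ((4:ℝ) ^ (n+1) * n.factorial) * Real.exp (-(δ/4) * τ) :=
                  mul_le_mul hp he (Real.exp_nonneg _) (by positivity)
  -- combine
  have hcomb := hmain.sub htail
  rw [sub_zero] at hcomb
  refine hcomb.congr' ?_
  filter_upwards [aux_c_lb a] with τ ⟨hle, h0⟩
  have hcpos : 0 < c τ := lt_of_lt_of_le (by positivity) hle
  have hsplit : (∫ s in Set.Ioi (0:ℝ), s ^ n * Real.exp (-(c τ) * s))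
      = (∫ s in Set.Ioc (0:ℝ) δ, s ^ n * Real.exp (-(c τ) * s))
        + ∫ s in Set.Ioi δ, s ^ n * Real.exp (-(c τ) * s) := by
    rw [← setIntegral_union (Set.Ioc_disjoint_Ioi le_rfl) measurableSet_Ioi
      ((aux_integrable n hcpos).mono_set Set.Ioc_subset_Ioi_self)
      ((aux_integrable n hcpos).mono_set (Ioi_subset_Ioi hδ.le)),
      Set.Ioc_union_Ioi_eq_Ioi hδ.le]
  rw [aux_integral n hcpos] at hsplit
  have : (∫ s in Set.Ioc (0:ℝ) δ, s ^ n * Real.exp (-(c τ) * s))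
      = n.factorial / (c τ) ^ (n+1) - ∫ s in Set.Ioi δ, s ^ n * Real.exp (-(c τ) * s) := by
    linarith
  rw [this, mul_sub]
  congr 1
  rw [div_pow]
  field_simp

end AuxStmt7

/-- Laplace-type asymptotics:
`τ^{n+1} ∫_W ∫₀^δ s^n e^{−τs} e^{√τ·s·g(y)} ds dy → n!·|W|`. -/
theorem stmt_7 (n m : ℕ) (δ : ℝ) (hδ : 0 < δ)
    (W : Set (Fin m → ℝ)) (hW : MeasurableSet W)
    (hW0 : volume W ≠ 0) (hWfin : volume W ≠ ⊤)
    (g : (Fin m → ℝ) → ℝ) (hgm : Measurable g)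
    (hgb : ∃ C : ℝ, ∀ y ∈ W, |g y| ≤ C) :
    Tendsto (fun τ : ℝ => τ ^ (n + 1) *
        ∫ y in W, ∫ s in (0:ℝ)..δ,
          s ^ n * Real.exp (-τ * s) * Real.exp (Real.sqrt τ * s * g y))
      atTop (nhds ((Nat.factorial n : ℝ) * (volume W).toReal)) := by
  obtain ⟨C₀, hC₀⟩ := hgb
  set C : ℝ := max C₀ 0 with hCdef
  have hCnn : (0:ℝ) ≤ C := le_max_right _ _
  have hgC : ∀ y ∈ W, |g y| ≤ C := fun y hy => (hC₀ y hy).trans (le_max_left _ _)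
  set F : ℝ → (Fin m → ℝ) → ℝ := fun τ y => τ ^ (n+1) *
    ∫ s in Set.Ioc (0:ℝ) δ, s ^ n * Real.exp (-(τ - Real.sqrt τ * g y) * s) with hF
  have hrw : ∀ τ : ℝ, τ ^ (n + 1) * (∫ y in W, ∫ s in (0:ℝ)..δ,
      s ^ n * Real.exp (-τ * s) * Real.exp (Real.sqrt τ * s * g y))
      = ∫ y in W, F τ y := by
    intro τ
    rw [← integral_const_mul]
    refine integral_congr_ae (Filter.Eventually.of_forall fun y => ?_)
    simp only [hF]
    congr 1
    rw [intervalIntegral.integral_of_le hδ.le]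
    refine setIntegral_congr_fun measurableSet_Ioc fun s _ => ?_
    rw [mul_assoc, ← Real.exp_add]
    congr 2
    ring
  have hF_meas : ∀ᶠ τ : ℝ in atTop, AEStronglyMeasurable (F τ) (volume.restrict W) := by
    refine Filter.Eventually.of_forall fun τ => ?_
    have hmeas : Measurable fun p : (Fin m → ℝ) × ℝ =>
        p.2 ^ n * Real.exp (-(τ - Real.sqrt τ * g p.1) * p.2) := by
      refine (measurable_snd.pow_const n).mul ?_
      exact Real.measurable_exp.comp
        (((measurable_const.sub (((hgm.comp measurable_fst)).const_mul
          (Real.sqrt τ))).neg).mul measurable_snd)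
    have hsm := hmeas.stronglyMeasurable.integral_prod_right'
      (ν := volume.restrict (Set.Ioc (0:ℝ) δ))
    exact ((hsm.const_mul (τ ^ (n+1))).aestronglyMeasurable)
  have h_bound : ∀ᶠ τ : ℝ in atTop, ∀ᵐ y ∂(volume.restrict W),
      ‖F τ y‖ ≤ (2:ℝ) ^ (n+1) * n.factorial := by
    filter_upwards [eventually_ge_atTop (max 1 (4 * C ^ 2))] with τ hτ
    rw [ae_restrict_iff' hW]
    refine Filter.Eventually.of_forall fun y hy => ?_
    have h1 : (1:ℝ) ≤ τ := le_trans (le_max_left _ _) hτ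
    have h0 : (0:ℝ) < τ := lt_of_lt_of_le one_pos h1
    have h2 : 4 * C ^ 2 ≤ τ := le_trans (le_max_right _ _) hτ
    have h3 : 2 * C ≤ Real.sqrt τ := by
      have := Real.sqrt_le_sqrt h2
      rwa [show 4 * C ^ 2 = (2 * C) ^ 2 by ring,
        Real.sqrt_sq (by positivity)] at this
    have hgy := hgC y hy
    have hcle : τ / 2 ≤ τ - Real.sqrt τ * g y := by
      have ha : Real.sqrt τ * g y ≤ Real.sqrt τ * C :=
        mul_le_mul_of_nonneg_left (le_trans (le_abs_self _) hgy) (Real.sqrt_nonneg τ)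
      have hb : Real.sqrt τ * C ≤ τ / 2 := by
        calc Real.sqrt τ * C ≤ Real.sqrt τ * (Real.sqrt τ / 2) := by
              apply mul_le_mul_of_nonneg_left _ (Real.sqrt_nonneg τ)
              linarith
          _ = τ / 2 := by rw [mul_div_assoc', Real.mul_self_sqrt h0.le]
      linarith
    have hcpos : 0 < τ - Real.sqrt τ * g y := lt_of_lt_of_le (by positivity) hcle
    have hτ2 : (0:ℝ) < τ / 2 := by positivity
    have hInn_nonneg : 0 ≤ ∫ s in Set.Ioc (0:ℝ) δ,
        s ^ n * Real.exp (-(τ - Real.sqrt τ * g y) * s) := by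
      refine setIntegral_nonneg measurableSet_Ioc fun s hs => ?_
      have := hs.1
      positivity
    rw [Real.norm_eq_abs, abs_of_nonneg (mul_nonneg (by positivity) hInn_nonneg)]
    have hmono1 : (∫ s in Set.Ioc (0:ℝ) δ, s ^ n * Real.exp (-(τ - Real.sqrt τ * g y) * s))
        ≤ ∫ s in Set.Ioc (0:ℝ) δ, s ^ n * Real.exp (-(τ/2) * s) := by
      refine setIntegral_mono_on
        ((aux_integrable n hcpos).mono_set Set.Ioc_subset_Ioi_self)
        ((aux_integrable n hτ2).mono_set Set.Ioc_subset_Ioi_self)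
        measurableSet_Ioc fun s hs => ?_
      refine mul_le_mul_of_nonneg_left (Real.exp_le_exp.2 ?_) (pow_nonneg hs.1.le n)
      nlinarith [hs.1, hcle]
    have hmono2 : (∫ s in Set.Ioc (0:ℝ) δ, s ^ n * Real.exp (-(τ/2) * s))
        ≤ ∫ s in Set.Ioi (0:ℝ), s ^ n * Real.exp (-(τ/2) * s) := by
      refine setIntegral_mono_set (aux_integrable n hτ2) ?_
        (HasSubset.Subset.eventuallyLE Set.Ioc_subset_Ioi_self)
      filter_upwards [ae_restrict_mem measurableSet_Ioi] with s hs
      simp only [Pi.zero_apply]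
      have hsp : (0:ℝ) < s := hs
      positivity
    rw [aux_integral n hτ2] at hmono2
    calc τ ^ (n+1) * ∫ s in Set.Ioc (0:ℝ) δ,
          s ^ n * Real.exp (-(τ - Real.sqrt τ * g y) * s)
        ≤ τ ^ (n+1) * (n.factorial / (τ/2) ^ (n+1)) :=
          mul_le_mul_of_nonneg_left (hmono1.trans hmono2) (by positivity)
      _ = (2:ℝ) ^ (n+1) * n.factorial := by
          rw [div_pow]
          field_simp
  have h_lim : ∀ᵐ y ∂(volume.restrict W),
      Tendsto (fun τ : ℝ => F τ y) atTop (nhds (n.factorial : ℝ)) :=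
    Filter.Eventually.of_forall fun y => key_tendsto n δ (g y) hδ
  have hbi : Integrable (fun _ : (Fin m → ℝ) => (2:ℝ) ^ (n+1) * n.factorial)
      (volume.restrict W) := by
    rw [integrable_const_iff]
    right
    exact ⟨by rw [Measure.restrict_apply_univ]; exact hWfin.lt_top⟩
  have hmain := tendsto_integral_filter_of_dominated_convergence
    (μ := volume.restrict W) (F := F) (f := fun _ => (n.factorial : ℝ))
    _ hF_meas h_bound hbi h_lim
  have hval : (∫ _ in W, (n.factorial : ℝ)) = (n.factorial : ℝ) * (volume W).toReal := by
    rw [setIntegral_const, smul_eq_mul, mul_comm]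
    rfl
  rw [hval] at hmain
  exact hmain.congr fun τ => (hrw τ).symm
end

section
/- Let Ω ⊂ ℝⁿ be a measurable set, let γ, γ₀ : Ω → ℝ be measurable with γ(x) ≥ c > 0 a.e., and let w, G : Ω → ℝⁿ be vector fields with γ|w|², (γ−γ₀)|G|², (γ−γ₀)²/γ·|G|² integrable, satisfying the orthogonality relation ∫_Ω ( γ |w|² + (γ − γ₀) G·w ) dx = 0. Then: (i) ∫_Ω γ |w|² dx ≤ ∫_Ω ((γ − γ₀)²/γ) |G|² dx; and consequently (ii) ∫_Ω (γ₀ (γ−γ₀)/γ) |G|² dx ≤ ∫_Ω (γ − γ₀) |G|² dx − ∫_Ω γ |w|² dx ≤ ∫_Ω (γ − γ₀) |G|² dx. -/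
open MeasureTheory

/-- two-sided energy bounds obtained by completing the square
from the orthogonality relation `∫ (γ|w|² + (γ−γ₀) G·w) = 0`. -/
theorem stmt_11 (n : ℕ) (Ω : Set (EuclideanSpace ℝ (Fin n))) (hΩ : MeasurableSet Ω)
    (γ γ₀ : EuclideanSpace ℝ (Fin n) → ℝ)
    (w G : EuclideanSpace ℝ (Fin n) → EuclideanSpace ℝ (Fin n))
    (hγm : Measurable γ) (hγ₀m : Measurable γ₀)
    (hwm : Measurable w) (hGm : Measurable G)
    (c : ℝ) (hc : 0 < c) (hγ : ∀ᵐ x ∂(volume.restrict Ω), c ≤ γ x)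
    (h1 : IntegrableOn (fun x => γ x * ‖w x‖ ^ 2) Ω)
    (h2 : IntegrableOn (fun x => (γ x - γ₀ x) * ‖G x‖ ^ 2) Ω)
    (h3 : IntegrableOn (fun x => (γ x - γ₀ x) ^ 2 / γ x * ‖G x‖ ^ 2) Ω)
    (h4 : IntegrableOn (fun x => (γ x - γ₀ x) * (inner ℝ (G x) (w x) : ℝ)) Ω)
    (horth : (∫ x in Ω,
        (γ x * ‖w x‖ ^ 2 + (γ x - γ₀ x) * (inner ℝ (G x) (w x) : ℝ))) = 0) :
    (∫ x in Ω, γ x * ‖w x‖ ^ 2)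
        ≤ (∫ x in Ω, (γ x - γ₀ x) ^ 2 / γ x * ‖G x‖ ^ 2) ∧
    (∫ x in Ω, γ₀ x * (γ x - γ₀ x) / γ x * ‖G x‖ ^ 2)
        ≤ (∫ x in Ω, (γ x - γ₀ x) * ‖G x‖ ^ 2) - (∫ x in Ω, γ x * ‖w x‖ ^ 2) ∧
    (∫ x in Ω, (γ x - γ₀ x) * ‖G x‖ ^ 2) - (∫ x in Ω, γ x * ‖w x‖ ^ 2)
        ≤ (∫ x in Ω, (γ x - γ₀ x) * ‖G x‖ ^ 2) := by

  have hsplit := integral_add h1 h4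
  rw [hsplit] at horth
  set A := ∫ x in Ω, γ x * ‖w x‖ ^ 2 with hA
  set B := ∫ x in Ω, (γ x - γ₀ x) ^ 2 / γ x * ‖G x‖ ^ 2 with hB
  set C := ∫ x in Ω, (γ x - γ₀ x) * ‖G x‖ ^ 2 with hC
  -- A is nonneg
  have hA0 : 0 ≤ A := by
    apply integral_nonneg_of_ae
    filter_upwards [hγ] with x hx
    have : 0 ≤ γ x := le_trans hc.le hx
    positivity
  -- key inequality
  have hAle : A ≤ 1/2 * (A + B) := by
    have hAeq : A = ∫ x in Ω, -((γ x - γ₀ x) * (inner ℝ (G x) (w x) : ℝ)) := by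
      rw [integral_neg]; linarith
    have hmono : (∫ x in Ω, -((γ x - γ₀ x) * (inner ℝ (G x) (w x) : ℝ)))
        ≤ ∫ x in Ω, (1/2 : ℝ) * (γ x * ‖w x‖ ^ 2 + (γ x - γ₀ x) ^ 2 / γ x * ‖G x‖ ^ 2) := by
      apply integral_mono_ae h4.neg ((h1.add h3).const_mul (1/2))
      filter_upwards [hγ] with x hx
      show -((γ x - γ₀ x) * (inner ℝ (G x) (w x) : ℝ))
          ≤ 1/2 * (γ x * ‖w x‖ ^ 2 + (γ x - γ₀ x) ^ 2 / γ x * ‖G x‖ ^ 2)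
      have hg : 0 < γ x := lt_of_lt_of_le hc hx
      set d := γ x - γ₀ x
      set a := |d| * ‖G x‖
      set b := ‖w x‖
      have hi : -(d * (inner ℝ (G x) (w x) : ℝ)) ≤ a * b := by
        calc -(d * (inner ℝ (G x) (w x) : ℝ)) ≤ |d * (inner ℝ (G x) (w x) : ℝ)| := neg_le_abs _
        _ = |d| * |(inner ℝ (G x) (w x) : ℝ)| := abs_mul _ _
        _ ≤ |d| * (‖G x‖ * ‖w x‖) := by
            apply mul_le_mul_of_nonneg_left (abs_real_inner_le_norm _ _) (abs_nonneg d)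
        _ = a * b := by ring
      have h0 : d ^ 2 / γ x * ‖G x‖ ^ 2 = a ^ 2 / γ x := by
        rw [div_mul_eq_mul_div]
        congr 1
        rw [mul_pow, sq_abs]
      have hdiv : 2 * a * b - γ x * b ^ 2 ≤ a ^ 2 / γ x := by
        rw [le_div_iff₀ hg]
        nlinarith [sq_nonneg (a - γ x * b)]
      rw [h0]
      clear_value d a b
      linarith
    rw [integral_const_mul, integral_add h1 h3] at hmono
    linarith
  have hABle : A ≤ B := by linarith
  refine ⟨hABle, ?_, by linarith⟩
  have hCeq : (∫ x in Ω, γ₀ x * (γ x - γ₀ x) / γ x * ‖G x‖ ^ 2) = C - B := by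
    have hcongr : (∫ x in Ω, γ₀ x * (γ x - γ₀ x) / γ x * ‖G x‖ ^ 2)
        = ∫ x in Ω, ((γ x - γ₀ x) * ‖G x‖ ^ 2 - (γ x - γ₀ x) ^ 2 / γ x * ‖G x‖ ^ 2) := by
      apply integral_congr_ae
      filter_upwards [hγ] with x hx
      have hg : γ x ≠ 0 := (lt_of_lt_of_le hc hx).ne'
      field_simp
      ring
    rw [hcongr, integral_sub h2 h3]
  rw [hCeq]
  linarith
end
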